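/- Periodicity criterion for Mathieu's equation: let a, q be real numbers and let P : ℝ → ℝ be a twice differentiable function satisfying P''(α) + (a − 2q·cos 2α)·P(α) = 0 for all α. If (P(0) = 0 and P(π/2) = 0) or (P'(0) = 0 and P'(π/2) = 0), then P(α + π) = P(α) for all α. If (P(0) = 0 and P'(π/2) = 0) or (P'(0) = 0 and P(π/2) = 0), then P(α + π) = −P(α) for all α. In all four cases P has period 2π: P(α + 2π) = P(α) for all α. -/

import Mathlib

open Real Set

/-- Global uniqueness for the second-order linear ODE `u'' = -(w t) * u`. -/
lemma ode2_unique (w : ℝ → ℝ) (K : NNReal) (hwK : ∀ t, |w t| ≤ K)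
    (f g : ℝ → ℝ)
    (hf : Differentiable ℝ f) (hf' : Differentiable ℝ (deriv f))
    (hg : Differentiable ℝ g) (hg' : Differentiable ℝ (deriv g))
    (hfe : ∀ t, deriv (deriv f) t = -(w t) * f t)
    (hge : ∀ t, deriv (deriv g) t = -(w t) * g t)
    (t₀ : ℝ) (h0 : f t₀ = g t₀) (h1 : deriv f t₀ = deriv g t₀) :
    ∀ t, f t = g t := by
  set v : ℝ → ℝ × ℝ → ℝ × ℝ := fun t p => (p.2, -(w t) * p.1) with hv_def
  have hK1 : (1 : ℝ) ≤ max 1 K := le_max_left _ _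
  have hlip : ∀ t, LipschitzWith (max 1 K) (v t) := by
    intro t
    apply LipschitzWith.of_dist_le_mul
    intro p q
    rw [Prod.dist_eq, Prod.dist_eq]
    have hd1 : dist p.1 q.1 ≤ max (dist p.1 q.1) (dist p.2 q.2) := le_max_left _ _
    have hd2 : dist p.2 q.2 ≤ max (dist p.1 q.1) (dist p.2 q.2) := le_max_right _ _
    have hdnn : (0:ℝ) ≤ max (dist p.1 q.1) (dist p.2 q.2) :=
      le_trans dist_nonneg hd1
    simp only [v]
    apply max_le
    · calc dist p.2 q.2 ≤ 1 * max (dist p.1 q.1) (dist p.2 q.2) := by linarith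
        _ ≤ ((max 1 K : NNReal)) * max (dist p.1 q.1) (dist p.2 q.2) := by
            apply mul_le_mul_of_nonneg_right _ hdnn
            exact_mod_cast hK1
    · have : dist (-(w t) * p.1) (-(w t) * q.1) = |w t| * dist p.1 q.1 := by
        rw [Real.dist_eq, Real.dist_eq, ← mul_sub, abs_mul, abs_neg]
      rw [this]
      calc |w t| * dist p.1 q.1 ≤ (K : ℝ) * max (dist p.1 q.1) (dist p.2 q.2) := by
            apply mul_le_mul (hwK t) hd1 dist_nonneg (K.coe_nonneg)
        _ ≤ ((max 1 K : NNReal)) * max (dist p.1 q.1) (dist p.2 q.2) := by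
            apply mul_le_mul_of_nonneg_right _ hdnn
            exact_mod_cast le_max_right 1 K
  set F : ℝ → ℝ × ℝ := fun t => (f t, deriv f t) with hF_def
  set G : ℝ → ℝ × ℝ := fun t => (g t, deriv g t) with hG_def
  have hF : ∀ t, HasDerivAt F (v t (F t)) t := by
    intro t
    have := ((hf t).hasDerivAt.prodMk (hf' t).hasDerivAt)
    simpa [v, F, hfe t] using this
  have hG : ∀ t, HasDerivAt G (v t (G t)) t := by
    intro t
    have := ((hg t).hasDerivAt.prodMk (hg' t).hasDerivAt)
    simpa [v, G, hge t] using this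
  intro t
  have hmem : t₀ ∈ Ioo (min t t₀ - 1) (max t t₀ + 1) := by
    constructor
    · have := min_le_right t t₀; linarith
    · have := le_max_right t t₀; linarith
  have key := ODE_solution_unique_of_mem_Ioo (v := v) (s := fun _ => (univ : Set (ℝ × ℝ)))
    (K := max 1 K) (f := F) (g := G)
    (fun t _ => ((hlip t).lipschitzOnWith (s := univ)))
    hmem (fun t _ => ⟨hF t, trivial⟩) (fun t _ => ⟨hG t, trivial⟩)
    (by simp [F, G, h0, h1])
  have ht : t ∈ Ioo (min t t₀ - 1) (max t t₀ + 1) := by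
    constructor
    · have := min_le_left t t₀; linarith
    · have := le_max_left t t₀; linarith
  have := key ht
  simpa [F, G, Prod.ext_iff] using congrArg Prod.fst this

/-- Reflection symmetry for solutions of `u'' = -(w t) * u` when `w` is symmetric
about `r`. -/
lemma ode2_reflect (w : ℝ → ℝ) (K : NNReal) (hwK : ∀ t, |w t| ≤ K)
    (P : ℝ → ℝ) (hP : Differentiable ℝ P) (hP' : Differentiable ℝ (deriv P))
    (hode : ∀ t, deriv (deriv P) t = -(w t) * P t)
    (r s : ℝ) (hwsym : ∀ t, w (2 * r - t) = w t)
    (h0 : P r = s * P r) (h1 : deriv P r = -(s * deriv P r)) :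
    ∀ t, P t = s * P (2 * r - t) := by
  set Q : ℝ → ℝ := fun t => s * P (2 * r - t) with hQ_def
  have hm : ∀ t : ℝ, HasDerivAt (fun x : ℝ => 2 * r - x) (-1) t := by
    intro t
    simpa using (hasDerivAt_id t).const_sub (2 * r)
  have hQ' : ∀ t, HasDerivAt Q (-s * deriv P (2 * r - t)) t := by
    intro t
    have := (((hP (2 * r - t)).hasDerivAt.comp t (hm t)).const_mul s)
    refine this.congr_deriv ?_
    ring
  have hQdiff : Differentiable ℝ Q := fun t => (hQ' t).differentiableAt
  have hQderiv : deriv Q = fun t => -s * deriv P (2 * r - t) := by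
    funext t; exact (hQ' t).deriv
  have hQ'' : ∀ t, HasDerivAt (deriv Q) (-(w t) * Q t) t := by
    intro t
    rw [hQderiv]
    have := (((hP' (2 * r - t)).hasDerivAt.comp t (hm t)).const_mul (-s))
    refine this.congr_deriv ?_
    rw [hode]
    rw [hwsym]
    simp only [Q]
    ring
  have hQdiff' : Differentiable ℝ (deriv Q) := fun t => (hQ'' t).differentiableAt
  have hQode : ∀ t, deriv (deriv Q) t = -(w t) * Q t := fun t => (hQ'' t).deriv
  intro t
  exact ode2_unique w K hwK P Q hP hP' hQdiff hQdiff' hode hQode r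
    (by simp only [Q]; rw [show 2 * r - r = r by ring]; exact h0)
    (by rw [hQderiv]; simp only []; rw [show 2 * r - r = r by ring]; linarith [h1]) t

/-- Periodicity criterion for Mathieu's equation. -/
theorem mathieu_periodicity_criterion
    (a q : ℝ) (P : ℝ → ℝ)
    (hP : Differentiable ℝ P) (hP' : Differentiable ℝ (deriv P))
    (hode : ∀ α : ℝ,
      deriv (deriv P) α + (a - 2 * q * Real.cos (2 * α)) * P α = 0) :
    ((P 0 = 0 ∧ P (π / 2) = 0) ∨ (deriv P 0 = 0 ∧ deriv P (π / 2) = 0) →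
      ∀ α : ℝ, P (α + π) = P α) ∧
    ((P 0 = 0 ∧ deriv P (π / 2) = 0) ∨ (deriv P 0 = 0 ∧ P (π / 2) = 0) →
      ∀ α : ℝ, P (α + π) = -P α) ∧
    ((P 0 = 0 ∨ deriv P 0 = 0) ∧ (P (π / 2) = 0 ∨ deriv P (π / 2) = 0) →
      ∀ α : ℝ, P (α + 2 * π) = P α) := by
  set w : ℝ → ℝ := fun t => a - 2 * q * Real.cos (2 * t) with hw_def
  have hode' : ∀ t, deriv (deriv P) t = -(w t) * P t := by
    intro t
    have := hode t
    simp only [w]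
    linarith
  set K : NNReal := ⟨|a| + 2 * |q|, by positivity⟩ with hK_def
  have hK : ∀ t, |w t| ≤ K := by
    intro t
    show |a - 2 * q * Real.cos (2 * t)| ≤ |a| + 2 * |q|
    have h1 : |Real.cos (2 * t)| ≤ 1 := Real.abs_cos_le_one _
    have h2 : |a - 2 * q * Real.cos (2 * t)| ≤ |a| + |2 * q * Real.cos (2 * t)| :=
      abs_sub a _
    have h3 : |2 * q * Real.cos (2 * t)| = 2 * |q| * |Real.cos (2 * t)| := by
      rw [abs_mul, abs_mul]
      norm_num
    have h4 : 2 * |q| * |Real.cos (2 * t)| ≤ 2 * |q| * 1 := by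
      apply mul_le_mul_of_nonneg_left h1 (by positivity)
    linarith [h2, h3.le, h3.ge]
  have hw0 : ∀ t, w (2 * 0 - t) = w t := by
    intro t
    simp only [w]
    rw [show 2 * (2 * 0 - t) = -(2 * t) by ring, Real.cos_neg]
  have hwpi : ∀ t, w (2 * (π / 2) - t) = w t := by
    intro t
    simp only [w]
    rw [show 2 * (2 * (π / 2) - t) = -(2 * t) + 2 * π by ring, Real.cos_add_two_pi,
      Real.cos_neg]
  have refl0 : ∀ s : ℝ, P 0 = s * P 0 → deriv P 0 = -(s * deriv P 0) →
      ∀ t, P t = s * P (-t) := by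
    intro s hh0 hh1 t
    have := ode2_reflect w K hK P hP hP' hode' 0 s hw0 hh0 hh1 t
    rwa [show (2 : ℝ) * 0 - t = -t by ring] at this
  have reflpi : ∀ s : ℝ, P (π / 2) = s * P (π / 2) →
      deriv P (π / 2) = -(s * deriv P (π / 2)) →
      ∀ t, P t = s * P (π - t) := by
    intro s hh0 hh1 t
    have := ode2_reflect w K hK P hP hP' hode' (π / 2) s hwpi hh0 hh1 t
    rwa [show 2 * (π / 2) - t = π - t by ring] at this
  have combine : ∀ s0 s1 : ℝ, (∀ t, P t = s0 * P (-t)) → (∀ t, P t = s1 * P (π - t)) →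
      ∀ α, P (α + π) = s0 * s1 * P α := by
    intro s0 s1 hA hB α
    have h1 : P (α + π) = s1 * P (π - (α + π)) := hB (α + π)
    have h2 : π - (α + π) = -α := by ring
    have h3 : P (-α) = s0 * P α := by
      have := hA (-α)
      rwa [neg_neg] at this
    rw [h1, h2, h3]; ring
  have part1 : (P 0 = 0 ∧ P (π / 2) = 0) ∨ (deriv P 0 = 0 ∧ deriv P (π / 2) = 0) →
      ∀ α : ℝ, P (α + π) = P α := by
    rintro (⟨h0, h1⟩ | ⟨h0, h1⟩) α
    · have := combine (-1) (-1)
        (refl0 (-1) (by rw [h0]; ring) (by ring))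
        (reflpi (-1) (by rw [h1]; ring) (by ring)) α
      linarith
    · have := combine 1 1
        (refl0 1 (by ring) (by rw [h0]; ring))
        (reflpi 1 (by ring) (by rw [h1]; ring)) α
      linarith
  have part2 : (P 0 = 0 ∧ deriv P (π / 2) = 0) ∨ (deriv P 0 = 0 ∧ P (π / 2) = 0) →
      ∀ α : ℝ, P (α + π) = -P α := by
    rintro (⟨h0, h1⟩ | ⟨h0, h1⟩) α
    · have := combine (-1) 1
        (refl0 (-1) (by rw [h0]; ring) (by ring))
        (reflpi 1 (by ring) (by rw [h1]; ring)) α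
      linarith
    · have := combine 1 (-1)
        (refl0 1 (by ring) (by rw [h0]; ring))
        (reflpi (-1) (by rw [h1]; ring) (by ring)) α
      linarith
  refine ⟨part1, part2, ?_⟩
  rintro ⟨h0 | h0, h1 | h1⟩ α <;>
  · first
    | (have hp := part1 (Or.inl ⟨h0, h1⟩)
       rw [show α + 2 * π = (α + π) + π by ring, hp, hp])
    | (have hp := part1 (Or.inr ⟨h0, h1⟩)
       rw [show α + 2 * π = (α + π) + π by ring, hp, hp])
    | (have hp := part2 (Or.inl ⟨h0, h1⟩)
       rw [show α + 2 * π = (α + π) + π by ring, hp, hp, neg_neg])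
    | (have hp := part2 (Or.inr ⟨h0, h1⟩)
       rw [show α + 2 * π = (α + π) + π by ring, hp, hp, neg_neg])
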